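/- arXiv:1203.6000 — 4 statements merged into one kernel-verified Lean document; each statement's English description precedes it below -/
import Mathlib

section
/- Let μ be a σ-finite measure half-invariant under a measurable map T : X → X, and let f ∈ L¹(X, μ) be non-negative. Then the limit f*(x) = lim_{n→∞} (1/n) Σ_{j=0}^{n-1} f(Tʲ(x)) exists for μ-almost every x. -/
open MeasureTheory Filter Set Topology ENNReal

set_option linter.unusedSectionVars false
set_option linter.unusedVariables false
set_option maxHeartbeats 1000000

namespace BirkhoffHalfAux

variable {X : Type*} [MeasurableSpace X]

/-- `maxF T g N = max (0, S₁g, …, S_N g)` defined recursively. -/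
noncomputable def maxF (T : X → X) (g : X → ℝ) : ℕ → X → ℝ
  | 0 => fun _ => 0
  | (N + 1) => fun x => max (g x + maxF T g N (T x)) 0

variable {T : X → X} {g : X → ℝ}

lemma maxF_nonneg (N : ℕ) (x : X) : 0 ≤ maxF T g N x := by
  cases N with
  | zero => exact le_rfl
  | succ N => exact le_max_right _ _

lemma maxF_measurable (hT : Measurable T) (hg : Measurable g) (N : ℕ) :
    Measurable (maxF T g N) := by
  induction N with
  | zero => exact measurable_const
  | succ N ih => exact (hg.add (ih.comp hT)).max measurable_const

lemma maxF_mono (N : ℕ) (x : X) : maxF T g N x ≤ maxF T g (N + 1) x := by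
  induction N generalizing x with
  | zero => exact maxF_nonneg 1 x
  | succ N ih =>
      exact max_le_max (add_le_add_right (ih (T x)) _) le_rfl

lemma sum_le_maxF (n : ℕ) (x : X) :
    ∑ j ∈ Finset.range n, g (T^[j] x) ≤ maxF T g n x := by
  induction n generalizing x with
  | zero => simp [maxF]
  | succ n ih =>
      have h1 : ∑ j ∈ Finset.range (n + 1), g (T^[j] x)
          = g x + ∑ j ∈ Finset.range n, g (T^[j] (T x)) := by
        rw [Finset.sum_range_succ']
        simp [Function.iterate_succ_apply, add_comm]
      rw [h1]
      exact le_trans (add_le_add_right (ih (T x)) _) (le_max_left _ _)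

variable (ν : Measure X)

lemma map_le (hT : Measurable T)
    (hhalf : ∀ B : Set X, MeasurableSet B → ν (T ⁻¹' B) ≤ ν B) :
    Measure.map T ν ≤ ν := by
  refine Measure.le_iff.2 fun s hs => ?_
  rw [Measure.map_apply hT hs]
  exact hhalf s hs

lemma integrable_comp (hT : Measurable T)
    (hhalf : ∀ B : Set X, MeasurableSet B → ν (T ⁻¹' B) ≤ ν B)
    {h : X → ℝ} (hm : Measurable h) (hi : Integrable h ν) :
    Integrable (fun x => h (T x)) ν := by
  have h1 : Integrable h (Measure.map T ν) :=
    hi.mono_measure (map_le ν hT hhalf)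
  exact (integrable_map_measure hm.aestronglyMeasurable hT.aemeasurable).mp h1

lemma integral_comp_le (hT : Measurable T)
    (hhalf : ∀ B : Set X, MeasurableSet B → ν (T ⁻¹' B) ≤ ν B)
    {h : X → ℝ} (hm : Measurable h) (hi : Integrable h ν) (h0 : ∀ x, 0 ≤ h x) :
    ∫ x, h (T x) ∂ν ≤ ∫ x, h x ∂ν := by
  rw [integral_eq_lintegral_of_nonneg_ae (Eventually.of_forall fun x => h0 (T x))
      (hm.comp hT).aestronglyMeasurable,
    integral_eq_lintegral_of_nonneg_ae (Eventually.of_forall h0) hm.aestronglyMeasurable]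
  have key : ∫⁻ x, ENNReal.ofReal (h (T x)) ∂ν ≤ ∫⁻ x, ENNReal.ofReal (h x) ∂ν := by
    have h2 : ∫⁻ x, ENNReal.ofReal (h x) ∂(Measure.map T ν)
        = ∫⁻ x, ENNReal.ofReal (h (T x)) ∂ν :=
      lintegral_map (ENNReal.measurable_ofReal.comp hm) hT
    rw [← h2]
    exact lintegral_mono' (map_le ν hT hhalf) le_rfl
  have hfin : ∫⁻ x, ENNReal.ofReal (h x) ∂ν ≠ ⊤ := hi.lintegral_lt_top.ne
  exact ENNReal.toReal_mono hfin key

/-- The maximal ergodic lemma for a half-invariant measure. -/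
lemma maximal' (hT : Measurable T)
    (hhalf : ∀ B : Set X, MeasurableSet B → ν (T ⁻¹' B) ≤ ν B)
    (hg : Measurable g) (hgi : Integrable g ν) :
    ∃ A : Set X, MeasurableSet A ∧
      {x | ∃ n, 0 < ∑ j ∈ Finset.range n, g (T^[j] x)} ⊆ A ∧
      0 ≤ ∫ x in A, g x ∂ν := by
  have hFmeas : ∀ N, Measurable (maxF T g N) := maxF_measurable hT hg
  have hFint : ∀ N, Integrable (maxF T g N) ν := by
    intro N
    induction N with
    | zero =>
        have : maxF T g 0 = fun _ : X => (0 : ℝ) := rfl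
        rw [this]
        exact integrable_zero _ _ _
    | succ N ih =>
        have : maxF T g (N + 1) = fun x => max (g x + maxF T g N (T x)) 0 := rfl
        rw [this]
        exact (hgi.add (integrable_comp ν hT hhalf (hFmeas N) ih)).pos_part
  set A : ℕ → Set X := fun N => {x | 0 < maxF T g N x} with hA
  have hAmeas : ∀ N, MeasurableSet (A N) :=
    fun N => measurableSet_lt measurable_const (hFmeas N)
  have hAmono : Monotone A :=
    monotone_nat_of_le_succ fun N x hx => lt_of_lt_of_le hx (maxF_mono N x)
  have hstep : ∀ N, 0 ≤ ∫ x in A N, g x ∂ν := by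
    intro N
    match N with
    | 0 =>
        have h0 : A 0 = ∅ := by
          ext x; simp [hA, maxF]
        rw [h0, Measure.restrict_empty, integral_zero_measure]
    | (N + 1) =>
        have hintT : Integrable (fun x => maxF T g N (T x)) ν :=
          integrable_comp ν hT hhalf (hFmeas N) (hFint N)
        have hEq : EqOn g (fun x => maxF T g (N + 1) x - maxF T g N (T x)) (A (N + 1)) := by
          intro x hx
          have hx' : 0 < max (g x + maxF T g N (T x)) 0 := hx
          have h1 : maxF T g (N + 1) x = g x + maxF T g N (T x) := by
            rcases le_or_gt (g x + maxF T g N (T x)) 0 with h | h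
            · exact absurd hx' (by simp [max_eq_right h])
            · exact max_eq_left h.le
          simp only [h1]
          ring
        have e1 : ∫ x in A (N + 1), g x ∂ν
            = ∫ x in A (N + 1), (maxF T g (N + 1) x - maxF T g N (T x)) ∂ν :=
          setIntegral_congr_fun (hAmeas (N + 1)) hEq
        have e2 : ∫ x in A (N + 1), (maxF T g (N + 1) x - maxF T g N (T x)) ∂ν
            = ∫ x in A (N + 1), maxF T g (N + 1) x ∂ν
              - ∫ x in A (N + 1), maxF T g N (T x) ∂ν :=
          integral_sub ((hFint (N + 1)).restrict) (hintT.restrict)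
        have e3 : ∫ x in A (N + 1), maxF T g (N + 1) x ∂ν = ∫ x, maxF T g (N + 1) x ∂ν := by
          have hz : ∫ x in (A (N + 1))ᶜ, maxF T g (N + 1) x ∂ν = 0 := by
            refine setIntegral_eq_zero_of_forall_eq_zero fun x hx => ?_
            have : ¬ 0 < maxF T g (N + 1) x := hx
            exact le_antisymm (not_lt.1 this) (maxF_nonneg (N + 1) x)
          rw [← integral_add_compl (hAmeas (N + 1)) (hFint (N + 1)), hz, add_zero]
        have e4 : ∫ x in A (N + 1), maxF T g N (T x) ∂ν ≤ ∫ x, maxF T g N x ∂ν :=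
          le_trans
            (setIntegral_le_integral hintT (Eventually.of_forall fun x => maxF_nonneg N (T x)))
            (integral_comp_le ν hT hhalf (hFmeas N) (hFint N) (maxF_nonneg N))
        have e5 : ∫ x, maxF T g N x ∂ν ≤ ∫ x, maxF T g (N + 1) x ∂ν :=
          integral_mono (hFint N) (hFint (N + 1)) fun x => maxF_mono N x
        rw [e1, e2, e3]
        linarith
  have hlim : Tendsto (fun N => ∫ x in A N, g x ∂ν) atTop (𝓝 (∫ x in ⋃ N, A N, g x ∂ν)) :=
    tendsto_setIntegral_of_monotone hAmeas hAmono hgi.integrableOn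
  refine ⟨⋃ N, A N, MeasurableSet.iUnion hAmeas, ?_, ge_of_tendsto' hlim hstep⟩
  rintro x ⟨n, hn⟩
  exact mem_iUnion.2 ⟨n, lt_of_lt_of_le hn (sum_le_maxF n x)⟩

lemma tendsto_div_nat {c : ℝ≥0∞} (hc : c ≠ ⊤) :
    Tendsto (fun n : ℕ => c / (n : ℝ≥0∞)) atTop (𝓝 0) := by
  have h := ENNReal.Tendsto.const_mul (a := c) ENNReal.tendsto_inv_nat_nhds_zero (Or.inr hc)
  simpa [div_eq_mul_inv] using h

lemma tendsto_div_nat_succ {c : ℝ≥0∞} (hc : c ≠ ⊤) :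
    Tendsto (fun n : ℕ => c / ((n : ℝ≥0∞) + 1)) atTop (𝓝 0) := by
  have h := (tendsto_div_nat hc).comp (tendsto_add_atTop_nat 1)
  refine h.congr fun n => ?_
  simp [Function.comp]

lemma mul_nat_div_le (t : ℝ≥0∞) (m : ℕ) : t * (m : ℝ≥0∞) / (m : ℝ≥0∞) ≤ t := by
  rw [mul_comm, mul_div_assoc]
  exact ENNReal.mul_div_le

lemma mul_succ_div_le (t : ℝ≥0∞) (m : ℕ) :
    t * ((m : ℝ≥0∞) + 1) / ((m : ℝ≥0∞) + 1) ≤ t := by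
  rw [mul_comm, mul_div_assoc]
  exact ENNReal.mul_div_le

lemma limsup_shift (a : ℕ → ℝ≥0∞) (c : ℝ≥0∞) (hc : c ≠ ⊤) :
    limsup (fun n : ℕ => (c + a n) / ((n : ℝ≥0∞) + 1)) atTop
      = limsup (fun n : ℕ => a n / (n : ℝ≥0∞)) atTop := by
  refine le_antisymm ?_ ?_
  · by_contra hlt
    push_neg at hlt
    obtain ⟨t, htQ, htP⟩ := exists_between hlt
    have htop : t ≠ ⊤ := ne_top_of_lt htP
    have hev : ∀ᶠ n in atTop, a n / (n : ℝ≥0∞) < t := eventually_lt_of_limsup_lt htQ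
    have hev2 : ∀ᶠ n : ℕ in atTop,
        (c + a n) / ((n : ℝ≥0∞) + 1) ≤ c / ((n : ℝ≥0∞) + 1) + t := by
      filter_upwards [hev, eventually_ge_atTop 1] with n hn h1
      have hn0 : (n : ℝ≥0∞) ≠ 0 := Nat.cast_ne_zero.2 (by omega)
      have hnt : (n : ℝ≥0∞) ≠ ⊤ := ENNReal.natCast_ne_top n
      have han : a n ≤ t * (n : ℝ≥0∞) :=
        ((ENNReal.div_lt_iff (Or.inl hn0) (Or.inl hnt)).1 hn).le
      calc (c + a n) / ((n : ℝ≥0∞) + 1)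
          ≤ (c + t * (n : ℝ≥0∞)) / ((n : ℝ≥0∞) + 1) :=
            ENNReal.div_le_div_right (add_le_add_right han c) _
        _ = c / ((n : ℝ≥0∞) + 1) + t * (n : ℝ≥0∞) / ((n : ℝ≥0∞) + 1) := ENNReal.add_div
        _ ≤ c / ((n : ℝ≥0∞) + 1) + t := by
            refine add_le_add_right ?_ _
            refine le_trans (ENNReal.div_le_div_right ?_ _) (mul_succ_div_le t n)
            exact mul_le_mul_right le_self_add t
    have hlim : Tendsto (fun n : ℕ => c / ((n : ℝ≥0∞) + 1) + t) atTop (𝓝 t) := by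
      have := Filter.Tendsto.add (tendsto_div_nat_succ hc)
        (tendsto_const_nhds (x := t))
      simpa using this
    exact absurd (le_trans (limsup_le_limsup hev2) hlim.limsup_eq.le) (not_le.2 htP)
  · by_contra hlt
    push_neg at hlt
    obtain ⟨t, htP, htQ⟩ := exists_between hlt
    have htop : t ≠ ⊤ := ne_top_of_lt htQ
    have hev : ∀ᶠ n in atTop, (c + a n) / ((n : ℝ≥0∞) + 1) < t :=
      eventually_lt_of_limsup_lt htP
    have hev2 : ∀ᶠ n : ℕ in atTop, a n / (n : ℝ≥0∞) ≤ t + t / (n : ℝ≥0∞) := by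
      filter_upwards [hev, eventually_ge_atTop 1] with n hn h1
      have hn0 : (n : ℝ≥0∞) ≠ 0 := Nat.cast_ne_zero.2 (by omega)
      have hnt : (n : ℝ≥0∞) ≠ ⊤ := ENNReal.natCast_ne_top n
      have hm0 : ((n : ℝ≥0∞) + 1) ≠ 0 := by simp
      have hmt : ((n : ℝ≥0∞) + 1) ≠ ⊤ := by
        simp [ENNReal.natCast_ne_top n]
      have h2 : c + a n < t * ((n : ℝ≥0∞) + 1) :=
        (ENNReal.div_lt_iff (Or.inl hm0) (Or.inl hmt)).1 hn
      have han : a n ≤ t * (n : ℝ≥0∞) + t := by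
        have := le_add_self.trans h2.le
        rwa [mul_add, mul_one] at this
      calc a n / (n : ℝ≥0∞) ≤ (t * (n : ℝ≥0∞) + t) / (n : ℝ≥0∞) :=
            ENNReal.div_le_div_right han _
        _ = t * (n : ℝ≥0∞) / (n : ℝ≥0∞) + t / (n : ℝ≥0∞) := ENNReal.add_div
        _ ≤ t + t / (n : ℝ≥0∞) := add_le_add_left (mul_nat_div_le t n) _
    have hlim : Tendsto (fun n : ℕ => t + t / (n : ℝ≥0∞)) atTop (𝓝 t) := by
      have := Filter.Tendsto.add (tendsto_const_nhds (x := t))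
        (tendsto_div_nat htop)
      simpa using this
    exact absurd (le_trans (limsup_le_limsup hev2) hlim.limsup_eq.le) (not_le.2 htQ)

lemma liminf_shift (a : ℕ → ℝ≥0∞) (c : ℝ≥0∞) (hc : c ≠ ⊤) :
    liminf (fun n : ℕ => (c + a n) / ((n : ℝ≥0∞) + 1)) atTop
      = liminf (fun n : ℕ => a n / (n : ℝ≥0∞)) atTop := by
  refine le_antisymm ?_ ?_
  · by_contra hlt
    push_neg at hlt
    obtain ⟨t, htQ, htP⟩ := exists_between hlt
    have htop : t ≠ ⊤ := ne_top_of_lt htP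
    have hev : ∀ᶠ n in atTop, t < (c + a n) / ((n : ℝ≥0∞) + 1) :=
      eventually_lt_of_lt_liminf htP
    have hev2 : ∀ᶠ n : ℕ in atTop, t - c / (n : ℝ≥0∞) ≤ a n / (n : ℝ≥0∞) := by
      filter_upwards [hev, eventually_ge_atTop 1] with n hn h1
      have hn0 : (n : ℝ≥0∞) ≠ 0 := Nat.cast_ne_zero.2 (by omega)
      have hnt : (n : ℝ≥0∞) ≠ ⊤ := ENNReal.natCast_ne_top n
      have hm0 : ((n : ℝ≥0∞) + 1) ≠ 0 := by simp
      have hmt : ((n : ℝ≥0∞) + 1) ≠ ⊤ := by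
        simp [ENNReal.natCast_ne_top n]
      have h2 : t * ((n : ℝ≥0∞) + 1) < c + a n :=
        (ENNReal.lt_div_iff_mul_lt (Or.inl hm0) (Or.inl hmt)).1 hn
      have h3 : t * (n : ℝ≥0∞) ≤ c + a n :=
        le_trans (mul_le_mul_right le_self_add t) h2.le
      have h4 : t ≤ (c + a n) / (n : ℝ≥0∞) :=
        (ENNReal.le_div_iff_mul_le (Or.inl hn0) (Or.inl hnt)).2 h3
      have h5 : t ≤ c / (n : ℝ≥0∞) + a n / (n : ℝ≥0∞) := by
        rwa [ENNReal.add_div] at h4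
      exact tsub_le_iff_left.2 h5
    have hlim : Tendsto (fun n : ℕ => t - c / (n : ℝ≥0∞)) atTop (𝓝 t) := by
      have := ENNReal.Tendsto.sub (tendsto_const_nhds (x := t))
        (tendsto_div_nat hc) (Or.inl htop)
      simpa using this
    have : t ≤ liminf (fun n : ℕ => a n / (n : ℝ≥0∞)) atTop :=
      hlim.liminf_eq.symm.le.trans (liminf_le_liminf hev2)
    exact absurd this (not_le.2 htQ)
  · by_contra hlt
    push_neg at hlt
    obtain ⟨t, htP, htQ⟩ := exists_between hlt
    have htop : t ≠ ⊤ := ne_top_of_lt htQ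
    have hev : ∀ᶠ n in atTop, t < a n / (n : ℝ≥0∞) :=
      eventually_lt_of_lt_liminf htQ
    have hev2 : ∀ᶠ n : ℕ in atTop,
        t - t / ((n : ℝ≥0∞) + 1) ≤ (c + a n) / ((n : ℝ≥0∞) + 1) := by
      filter_upwards [hev, eventually_ge_atTop 1] with n hn h1
      have hn0 : (n : ℝ≥0∞) ≠ 0 := Nat.cast_ne_zero.2 (by omega)
      have hnt : (n : ℝ≥0∞) ≠ ⊤ := ENNReal.natCast_ne_top n
      have hm0 : ((n : ℝ≥0∞) + 1) ≠ 0 := by simp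
      have hmt : ((n : ℝ≥0∞) + 1) ≠ ⊤ := by
        simp [ENNReal.natCast_ne_top n]
      have h2 : t * (n : ℝ≥0∞) ≤ a n :=
        ((ENNReal.lt_div_iff_mul_lt (Or.inl hn0) (Or.inl hnt)).1 hn).le
      have h4 : t ≤ (t * (n : ℝ≥0∞) + t) / ((n : ℝ≥0∞) + 1) := by
        refine (ENNReal.le_div_iff_mul_le (Or.inl hm0) (Or.inl hmt)).2 ?_
        rw [mul_add, mul_one]
      have h5 : t - t / ((n : ℝ≥0∞) + 1) ≤ t * (n : ℝ≥0∞) / ((n : ℝ≥0∞) + 1) := by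
        rw [ENNReal.add_div] at h4
        exact tsub_le_iff_right.2 h4
      refine h5.trans (ENNReal.div_le_div_right ?_ _)
      exact h2.trans le_add_self
    have hlim : Tendsto (fun n : ℕ => t - t / ((n : ℝ≥0∞) + 1)) atTop (𝓝 t) := by
      have := ENNReal.Tendsto.sub (tendsto_const_nhds (x := t))
        (tendsto_div_nat_succ htop) (Or.inl htop)
      simpa using this
    have : t ≤ liminf (fun n : ℕ => (c + a n) / ((n : ℝ≥0∞) + 1)) atTop :=
      hlim.liminf_eq.symm.le.trans (liminf_le_liminf hev2)
    exact absurd this (not_le.2 htP)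

/-! ### Birkhoff sums and their limsup/liminf -/

noncomputable def birkS (T : X → X) (f : X → ℝ) (n : ℕ) (x : X) : ℝ :=
  ∑ j ∈ Finset.range n, f (T^[j] x)

noncomputable def birkPsi (T : X → X) (f : X → ℝ) (n : ℕ) (x : X) : ℝ≥0∞ :=
  ENNReal.ofReal (birkS T f n x) / (n : ℝ≥0∞)

noncomputable def birkU (T : X → X) (f : X → ℝ) (x : X) : ℝ≥0∞ :=
  limsup (fun n : ℕ => birkPsi T f n x) atTop

noncomputable def birkL (T : X → X) (f : X → ℝ) (x : X) : ℝ≥0∞ :=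
  liminf (fun n : ℕ => birkPsi T f n x) atTop

variable {T : X → X} {f : X → ℝ}

lemma birkS_measurable (hT : Measurable T) (hf : Measurable f) (n : ℕ) :
    Measurable (birkS T f n) :=
  Finset.measurable_sum _ fun j _ => hf.comp (hT.iterate j)

lemma birkS_nonneg (hf0 : ∀ x, 0 ≤ f x) (n : ℕ) (x : X) : 0 ≤ birkS T f n x :=
  Finset.sum_nonneg fun j _ => hf0 _

lemma birkPsi_measurable (hT : Measurable T) (hf : Measurable f) (n : ℕ) :
    Measurable (birkPsi T f n) :=
  (ENNReal.measurable_ofReal.comp (birkS_measurable hT hf n)).div_const _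

lemma birkU_measurable (hT : Measurable T) (hf : Measurable f) :
    Measurable (birkU T f) :=
  Measurable.limsup (birkPsi_measurable hT hf)

lemma birkL_measurable (hT : Measurable T) (hf : Measurable f) :
    Measurable (birkL T f) :=
  Measurable.liminf (birkPsi_measurable hT hf)

lemma birkS_succ (n : ℕ) (x : X) :
    birkS T f (n + 1) x = f x + birkS T f n (T x) := by
  unfold birkS
  rw [Finset.sum_range_succ']
  simp [Function.iterate_succ_apply, add_comm]

lemma birkPsi_succ (hf0 : ∀ x, 0 ≤ f x) (n : ℕ) (x : X) :
    birkPsi T f (n + 1) x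
      = (ENNReal.ofReal (f x) + ENNReal.ofReal (birkS T f n (T x))) / ((n : ℝ≥0∞) + 1) := by
  unfold birkPsi
  rw [birkS_succ, ENNReal.ofReal_add (hf0 x) (birkS_nonneg hf0 n (T x))]
  push_cast
  ring_nf

lemma birkU_comp (hf0 : ∀ x, 0 ≤ f x) (x : X) : birkU T f (T x) = birkU T f x := by
  have h1 : birkU T f x = limsup (fun n : ℕ => birkPsi T f (n + 1) x) atTop :=
    (limsup_nat_add (fun n : ℕ => birkPsi T f n x) 1).symm
  rw [h1]
  have h2 : (fun n : ℕ => birkPsi T f (n + 1) x)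
      = fun n : ℕ => (ENNReal.ofReal (f x) + ENNReal.ofReal (birkS T f n (T x)))
          / ((n : ℝ≥0∞) + 1) := funext fun n => birkPsi_succ hf0 n x
  rw [h2, limsup_shift _ _ ENNReal.ofReal_ne_top]
  rfl

lemma birkL_comp (hf0 : ∀ x, 0 ≤ f x) (x : X) : birkL T f (T x) = birkL T f x := by
  have h1 : birkL T f x = liminf (fun n : ℕ => birkPsi T f (n + 1) x) atTop :=
    (liminf_nat_add (fun n : ℕ => birkPsi T f n x) 1).symm
  rw [h1]
  have h2 : (fun n : ℕ => birkPsi T f (n + 1) x)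
      = fun n : ℕ => (ENNReal.ofReal (f x) + ENNReal.ofReal (birkS T f n (T x)))
          / ((n : ℝ≥0∞) + 1) := funext fun n => birkPsi_succ hf0 n x
  rw [h2, liminf_shift _ _ ENNReal.ofReal_ne_top]
  rfl

lemma exists_of_lt_birkU (hf0 : ∀ x, 0 ≤ f x) {b : ℝ} (hb : 0 ≤ b) {x : X}
    (h : ENNReal.ofReal b < birkU T f x) : ∃ n, b * n < birkS T f n x := by
  have hfreq : ∃ᶠ n in atTop, ENNReal.ofReal b < birkPsi T f n x :=
    frequently_lt_of_lt_limsup (by isBoundedDefault) h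
  obtain ⟨n, hn1, hn⟩ := frequently_atTop.1 hfreq 1
  refine ⟨n, ?_⟩
  have hn0 : (n : ℝ≥0∞) ≠ 0 := Nat.cast_ne_zero.2 (by omega)
  have hnt : (n : ℝ≥0∞) ≠ ⊤ := ENNReal.natCast_ne_top n
  have h2 : ENNReal.ofReal b * (n : ℝ≥0∞) < ENNReal.ofReal (birkS T f n x) :=
    (ENNReal.lt_div_iff_mul_lt (Or.inl hn0) (Or.inl hnt)).1 hn
  have h3 : ENNReal.ofReal (b * n) < ENNReal.ofReal (birkS T f n x) := by
    rwa [ENNReal.ofReal_mul hb, ENNReal.ofReal_natCast]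
  exact (ENNReal.ofReal_lt_ofReal_iff_of_nonneg (by positivity)).1 h3

lemma exists_of_birkL_lt (hf0 : ∀ x, 0 ≤ f x) {a : ℝ} {x : X}
    (h : birkL T f x < ENNReal.ofReal a) : ∃ n, 1 ≤ n ∧ birkS T f n x < a * n := by
  have hfreq : ∃ᶠ n in atTop, birkPsi T f n x < ENNReal.ofReal a :=
    frequently_lt_of_liminf_lt (by isBoundedDefault) h
  obtain ⟨n, hn1, hn⟩ := frequently_atTop.1 hfreq 1
  refine ⟨n, hn1, ?_⟩
  have hn0 : (n : ℝ≥0∞) ≠ 0 := Nat.cast_ne_zero.2 (by omega)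
  have hnt : (n : ℝ≥0∞) ≠ ⊤ := ENNReal.natCast_ne_top n
  have h2 : ENNReal.ofReal (birkS T f n x) < ENNReal.ofReal a * (n : ℝ≥0∞) :=
    (ENNReal.div_lt_iff (Or.inl hn0) (Or.inl hnt)).1 hn
  have ha : 0 ≤ a := by
    by_contra hneg
    push_neg at hneg
    rw [ENNReal.ofReal_eq_zero.2 hneg.le] at h2
    simp at h2
  have h3 : ENNReal.ofReal (birkS T f n x) < ENNReal.ofReal (a * n) := by
    rwa [ENNReal.ofReal_mul ha, ENNReal.ofReal_natCast]
  exact (ENNReal.ofReal_lt_ofReal_iff_of_nonneg (birkS_nonneg hf0 n x)).1 h3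

/-! ### measure bound on the set where some average exceeds `b` -/

lemma measure_exceed (μ : Measure X) [SigmaFinite μ]
    (hT : Measurable T)
    (hhalf : ∀ B : Set X, MeasurableSet B → μ (T ⁻¹' B) ≤ μ B)
    (hf : Measurable f) (hfi : Integrable f μ) (hf0 : ∀ x, 0 ≤ f x)
    {b : ℝ} (hb : 0 < b) :
    μ {x | ∃ n, b * n < birkS T f n x} ≤ ENNReal.ofReal ((∫ x, f x ∂μ) / b) := by
  set D := {x | ∃ n, b * n < birkS T f n x} with hD
  have hDmeas : MeasurableSet D := by
    have : D = ⋃ n, {x | b * n < birkS T f n x} := by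
      ext x; simp [hD]
    rw [this]
    exact MeasurableSet.iUnion fun n =>
      measurableSet_lt measurable_const (birkS_measurable hT hf n)
  have key : ∀ C : Set X, MeasurableSet C → C ⊆ D → μ C ≠ ⊤ →
      μ C ≤ ENNReal.ofReal ((∫ x, f x ∂μ) / b) := by
    intro C hC hCD hCfin
    set g : X → ℝ := fun x => f x - b * C.indicator (fun _ => (1 : ℝ)) x with hg
    have hindm : Measurable (C.indicator (fun _ : X => (1 : ℝ))) :=
      measurable_const.indicator hC
    have hindi : Integrable (C.indicator (fun _ : X => (1 : ℝ))) μ :=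
      (integrable_indicator_iff hC).2 (integrableOn_const hCfin)
    have hgm : Measurable g := hf.sub (hindm.const_mul b)
    have hgi : Integrable g μ := hfi.sub (hindi.const_mul b)
    obtain ⟨A, hA, hsub, hpos⟩ := maximal' μ hT hhalf hgm hgi
    have hDA : D ⊆ A := by
      rintro x ⟨n, hn⟩
      refine hsub ⟨n, ?_⟩
      have hsum : ∑ j ∈ Finset.range n, g (T^[j] x)
          = birkS T f n x
            - b * ∑ j ∈ Finset.range n, C.indicator (fun _ => (1 : ℝ)) (T^[j] x) := by
        simp only [hg]
        rw [Finset.sum_sub_distrib, ← Finset.mul_sum]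
        rfl
      have hile : ∑ j ∈ Finset.range n, C.indicator (fun _ => (1 : ℝ)) (T^[j] x) ≤ n := by
        calc ∑ j ∈ Finset.range n, C.indicator (fun _ => (1 : ℝ)) (T^[j] x)
            ≤ ∑ _j ∈ Finset.range n, (1 : ℝ) :=
              Finset.sum_le_sum fun j _ => by
                classical
                by_cases hmem : T^[j] x ∈ C
                · simp [Set.indicator_of_mem hmem]
                · simp [Set.indicator_of_notMem hmem]
          _ = n := by simp
      have : b * ∑ j ∈ Finset.range n, C.indicator (fun _ => (1 : ℝ)) (T^[j] x) ≤ b * n :=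
        mul_le_mul_of_nonneg_left hile hb.le
      rw [hsum]
      linarith
    have hCA : C ⊆ A := hCD.trans hDA
    have hint : ∫ x in A, g x ∂μ = ∫ x in A, f x ∂μ - b * (μ C).toReal := by
      rw [hg]
      rw [integral_sub hfi.integrableOn ((hindi.const_mul b).integrableOn)]
      congr 1
      rw [integral_const_mul]
      congr 1
      rw [setIntegral_indicator hC, setIntegral_const,
        inter_eq_self_of_subset_right hCA]
      simp [Measure.real]
    have h1 : b * (μ C).toReal ≤ ∫ x in A, f x ∂μ := by
      rw [hint] at hpos; linarith
    have h2 : ∫ x in A, f x ∂μ ≤ ∫ x, f x ∂μ :=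
      setIntegral_le_integral hfi (Eventually.of_forall hf0)
    have h3 : (μ C).toReal ≤ (∫ x, f x ∂μ) / b := by
      rw [le_div_iff₀ hb]; linarith
    calc μ C = ENNReal.ofReal (μ C).toReal := (ENNReal.ofReal_toReal hCfin).symm
      _ ≤ ENNReal.ofReal ((∫ x, f x ∂μ) / b) := ENNReal.ofReal_le_ofReal h3
  have hcover : D = ⋃ k, D ∩ spanningSets μ k := by
    rw [← inter_iUnion, iUnion_spanningSets, inter_univ]
  have hmono : Monotone fun k => D ∩ spanningSets μ k := fun i j h =>
    inter_subset_inter_right _ (monotone_spanningSets μ h)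
  have hlim := tendsto_measure_iUnion_atTop (μ := μ) hmono
  rw [hcover]
  refine le_of_tendsto' hlim fun k => key _ (hDmeas.inter (measurableSet_spanningSets μ k))
    inter_subset_left ?_
  exact ((measure_mono inter_subset_right).trans_lt (measure_spanningSets_lt_top μ k)).ne

lemma measure_birkU_top (μ : Measure X) [SigmaFinite μ]
    (hT : Measurable T)
    (hhalf : ∀ B : Set X, MeasurableSet B → μ (T ⁻¹' B) ≤ μ B)
    (hf : Measurable f) (hfi : Integrable f μ) (hf0 : ∀ x, 0 ≤ f x) :
    μ {x | birkU T f x = ⊤} = 0 := by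
  have hbound : ∀ k : ℕ, μ {x | birkU T f x = ⊤}
      ≤ ENNReal.ofReal ((∫ x, f x ∂μ) / (k + 1)) := by
    intro k
    refine le_trans (measure_mono ?_) (measure_exceed μ hT hhalf hf hfi hf0
      (b := (k : ℝ) + 1) (by positivity))
    intro x hx
    have h : ENNReal.ofReal ((k : ℝ) + 1) < birkU T f x := by
      rw [mem_setOf_eq] at hx; rw [hx]; exact ENNReal.ofReal_lt_top
    exact exists_of_lt_birkU hf0 (by positivity) h
  have htend : Tendsto (fun k : ℕ => ENNReal.ofReal ((∫ x, f x ∂μ) / (k + 1)))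
      atTop (𝓝 0) := by
    have h1 : Tendsto (fun k : ℕ => (∫ x, f x ∂μ) / ((k : ℝ) + 1)) atTop (𝓝 0) := by
      have := (tendsto_const_div_atTop_nhds_zero_nat (∫ x, f x ∂μ)).comp
        (tendsto_add_atTop_nat 1)
      refine this.congr fun n => ?_
      simp [Function.comp]
    simpa [ENNReal.ofReal_zero] using ENNReal.tendsto_ofReal h1
  exact le_antisymm (ge_of_tendsto' htend hbound) zero_le

lemma measure_E_null (μ : Measure X) [SigmaFinite μ]
    (hT : Measurable T)
    (hhalf : ∀ B : Set X, MeasurableSet B → μ (T ⁻¹' B) ≤ μ B)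
    (hf : Measurable f) (hfi : Integrable f μ) (hf0 : ∀ x, 0 ≤ f x)
    {a b : ℝ} (ha : 0 ≤ a) (hab : a < b) :
    μ {x | birkL T f x < ENNReal.ofReal a ∧ ENNReal.ofReal b < birkU T f x} = 0 := by
  have hb : 0 < b := ha.trans_lt hab
  set E := {x | birkL T f x < ENNReal.ofReal a ∧ ENNReal.ofReal b < birkU T f x} with hE
  have m1 : MeasurableSet {x | birkL T f x < ENNReal.ofReal a} :=
    measurableSet_lt (birkL_measurable hT hf) measurable_const
  have m2 : MeasurableSet {x | ENNReal.ofReal b < birkU T f x} :=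
    measurableSet_lt measurable_const (birkU_measurable hT hf)
  have hEmeas : MeasurableSet E := by
    rw [hE, setOf_and]
    exact m1.inter m2
  have hED : E ⊆ {x | ∃ n, b * n < birkS T f n x} := fun x hx =>
    exists_of_lt_birkU hf0 hb.le hx.2
  have hEfin : μ E ≠ ⊤ :=
    (((measure_mono hED).trans (measure_exceed μ hT hhalf hf hfi hf0 hb)).trans_lt
      ENNReal.ofReal_lt_top).ne
  have hInv : T ⁻¹' E = E := by
    ext x
    simp only [hE, mem_preimage, mem_setOf_eq, birkL_comp hf0, birkU_comp hf0]
  set ν := μ.restrict E with hν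
  haveI : IsFiniteMeasure ν := ⟨by rw [hν, Measure.restrict_apply_univ]; exact hEfin.lt_top⟩
  have hhalfν : ∀ B : Set X, MeasurableSet B → ν (T ⁻¹' B) ≤ ν B := by
    intro B hB
    rw [hν, Measure.restrict_apply (hT hB), Measure.restrict_apply hB]
    have : T ⁻¹' B ∩ E = T ⁻¹' (B ∩ E) := by rw [preimage_inter, hInv]
    rw [this]
    exact hhalf _ (hB.inter hEmeas)
  -- first application : lower bound b * μ E ≤ ∫_E f
  obtain ⟨A₁, hA₁, hsub₁, hpos₁⟩ := maximal' ν hT hhalfν (hf.sub measurable_const)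
    (hfi.restrict.sub (integrable_const b))
  have hEA₁ : E ⊆ A₁ := by
    intro x hx
    obtain ⟨n, hn⟩ := exists_of_lt_birkU hf0 hb.le hx.2
    refine hsub₁ ⟨n, ?_⟩
    have : ∑ j ∈ Finset.range n, (f (T^[j] x) - b) = birkS T f n x - n * b := by
      rw [Finset.sum_sub_distrib, Finset.sum_const, Finset.card_range, nsmul_eq_mul]
      rfl
    simp only [Pi.sub_apply]
    rw [this]
    have : b * n = n * b := mul_comm _ _
    linarith [hn]
  have hval₁ : 0 ≤ ∫ x in E, (f x - b) ∂μ := by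
    have hre : ν.restrict A₁ = μ.restrict E := by
      rw [hν, Measure.restrict_restrict hA₁, inter_eq_self_of_subset_right hEA₁]
    have : ∫ x in A₁, (f x - b) ∂ν = ∫ x in E, (f x - b) ∂μ := by
      show ∫ x, (f x - b) ∂(ν.restrict A₁) = _
      rw [hre]
    rw [← this]
    exact hpos₁
  have hsplit₁ : ∫ x in E, (f x - b) ∂μ = ∫ x in E, f x ∂μ - b * (μ E).toReal := by
    rw [integral_sub hfi.integrableOn (integrableOn_const hEfin)]
    rw [setIntegral_const]
    simp [smul_eq_mul, mul_comm, Measure.real]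
  -- second application : upper bound ∫_E f ≤ a * μ E
  obtain ⟨A₂, hA₂, hsub₂, hpos₂⟩ := maximal' ν hT hhalfν (measurable_const.sub hf)
    ((integrable_const a).sub hfi.restrict)
  have hEA₂ : E ⊆ A₂ := by
    intro x hx
    obtain ⟨n, hn1, hn⟩ := exists_of_birkL_lt hf0 hx.1
    refine hsub₂ ⟨n, ?_⟩
    have : ∑ j ∈ Finset.range n, (a - f (T^[j] x)) = n * a - birkS T f n x := by
      rw [Finset.sum_sub_distrib, Finset.sum_const, Finset.card_range, nsmul_eq_mul]
      rfl
    simp only [Pi.sub_apply]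
    rw [this]
    have : a * n = n * a := mul_comm _ _
    linarith [hn]
  have hval₂ : 0 ≤ ∫ x in E, (a - f x) ∂μ := by
    have hre : ν.restrict A₂ = μ.restrict E := by
      rw [hν, Measure.restrict_restrict hA₂, inter_eq_self_of_subset_right hEA₂]
    have : ∫ x in A₂, (a - f x) ∂ν = ∫ x in E, (a - f x) ∂μ := by
      show ∫ x, (a - f x) ∂(ν.restrict A₂) = _
      rw [hre]
    rw [← this]
    exact hpos₂
  have hsplit₂ : ∫ x in E, (a - f x) ∂μ = a * (μ E).toReal - ∫ x in E, f x ∂μ := by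
    rw [integral_sub (integrableOn_const hEfin : IntegrableOn (fun _ => a) E μ) hfi.integrableOn]
    rw [setIntegral_const]
    simp [smul_eq_mul, mul_comm, Measure.real]
  -- combine
  have ht0 : (μ E).toReal = 0 := by
    have h1 : b * (μ E).toReal ≤ ∫ x in E, f x ∂μ := by
      rw [hsplit₁] at hval₁; linarith
    have h2 : ∫ x in E, f x ∂μ ≤ a * (μ E).toReal := by
      rw [hsplit₂] at hval₂; linarith
    nlinarith [ENNReal.toReal_nonneg (a := μ E)]
  rcases (ENNReal.toReal_eq_zero_iff _).1 ht0 with h | h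
  · exact h
  · exact absurd h hEfin

end BirkhoffHalfAux

open BirkhoffHalfAux
theorem birkhoff_halfInvariant_ae_convergence
    {X : Type*} [MeasurableSpace X] (μ : Measure X) [SigmaFinite μ]
    (T : X → X) (hT : Measurable T)
    (hhalf : ∀ B : Set X, MeasurableSet B → μ (T ⁻¹' B) ≤ μ B)
    (f : X → ℝ) (hf : Measurable f) (hfi : Integrable f μ) (hf0 : ∀ x, 0 ≤ f x) :
    ∀ᵐ x ∂μ, ∃ L : ℝ,
      Tendsto (fun n : ℕ => (n : ℝ)⁻¹ * ∑ j ∈ Finset.range n, f (T^[j] x))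
        atTop (nhds L) := by
  classical
  have h1 := measure_birkU_top μ hT hhalf hf hfi hf0
  set E' : ℚ × ℚ → Set X := fun p =>
    {x | (birkL T f x < ENNReal.ofReal (p.1 : ℝ) ∧ ENNReal.ofReal (p.2 : ℝ) < birkU T f x)
      ∧ 0 ≤ (p.1 : ℝ) ∧ (p.1 : ℝ) < (p.2 : ℝ)} with hE'
  have h2 : ∀ p : ℚ × ℚ, μ (E' p) = 0 := by
    intro p
    by_cases hp : 0 ≤ (p.1 : ℝ) ∧ (p.1 : ℝ) < (p.2 : ℝ)
    · exact measure_mono_null (fun x hx => hx.1)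
        (measure_E_null μ hT hhalf hf hfi hf0 hp.1 hp.2)
    · have : E' p = ∅ := eq_empty_iff_forall_notMem.2 fun x hx => hp hx.2
      simp [this]
  have hN : μ ({x | birkU T f x = ⊤} ∪ ⋃ p : ℚ × ℚ, E' p) = 0 :=
    measure_union_null h1 (measure_iUnion_null h2)
  have hae : ∀ᵐ x ∂μ, x ∉ ({x | birkU T f x = ⊤} ∪ ⋃ p : ℚ × ℚ, E' p) :=
    measure_eq_zero_iff_ae_notMem.1 hN
  filter_upwards [hae] with x hx
  have hxt : birkU T f x ≠ ⊤ := fun h => hx (mem_union_left _ h)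
  have hxE : ∀ p : ℚ × ℚ, x ∉ E' p := fun p hp =>
    hx (mem_union_right _ (mem_iUnion.2 ⟨p, hp⟩))
  have hle : birkL T f x ≤ birkU T f x := liminf_le_limsup
  have heq : birkL T f x = birkU T f x := by
    by_contra hne
    have hlt : birkL T f x < birkU T f x := hle.lt_of_ne hne
    have hLf : birkL T f x ≠ ⊤ := ne_top_of_lt hlt
    have hts : (birkL T f x).toReal < (birkU T f x).toReal :=
      (ENNReal.toReal_lt_toReal hLf hxt).2 hlt
    obtain ⟨q, hq1, hq2⟩ := exists_rat_btwn hts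
    obtain ⟨r, hr1, hr2⟩ := exists_rat_btwn hq2
    refine hxE (q, r) ?_
    have hq0 : 0 ≤ (q : ℝ) := le_of_lt (lt_of_le_of_lt ENNReal.toReal_nonneg hq1)
    have hr0 : 0 ≤ (r : ℝ) := hq0.trans hr1.le
    refine ⟨⟨?_, ?_⟩, hq0, by exact_mod_cast hr1⟩
    · exact (ENNReal.lt_ofReal_iff_toReal_lt hLf).2 hq1
    · exact (ENNReal.ofReal_lt_iff_lt_toReal hr0 hxt).2 hr2
  have htend : Tendsto (fun n : ℕ => birkPsi T f n x) atTop (𝓝 (birkU T f x)) :=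
    tendsto_of_liminf_eq_limsup heq rfl
  have htR : Tendsto (fun n : ℕ => (birkPsi T f n x).toReal) atTop
      (𝓝 (birkU T f x).toReal) :=
    (ENNReal.tendsto_toReal hxt).comp htend
  refine ⟨(birkU T f x).toReal, Tendsto.congr' ?_ htR⟩
  filter_upwards [eventually_ge_atTop 1] with n hn
  show (birkPsi T f n x).toReal = (n : ℝ)⁻¹ * ∑ j ∈ Finset.range n, f (T^[j] x)
  unfold birkPsi birkS
  rw [ENNReal.toReal_div, ENNReal.toReal_ofReal (Finset.sum_nonneg fun j _ => hf0 _),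
    ENNReal.toReal_natCast, div_eq_mul_inv, mul_comm]
end

section
/- Let μ be a finite measure on (X, 𝔅), half-invariant under a measurable T : X → X, and let f ∈ L¹(X, μ) be non-negative. Then ∫ f* dμ = lim_{n→∞} (1/n) Σ_{j=0}^{n-1} ∫ f ∘ Tʲ dμ = ∫ f dμ, where f* is the μ-a.e. limit of the Birkhoff averages of f. -/
open MeasureTheory Filter ENNReal

theorem birkhoff_halfInvariant_finite_integrals
    {X : Type*} [MeasurableSpace X] (μ : Measure X) [IsFiniteMeasure μ]
    (T : X → X) (hT : Measurable T)
    (hhalf : ∀ B : Set X, MeasurableSet B → μ (T ⁻¹' B) ≤ μ B)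
    (f : X → ℝ) (hf : Measurable f) (hfi : Integrable f μ) (hf0 : ∀ x, 0 ≤ f x)
    (fstar : X → ℝ)
    (hfstar : ∀ᵐ x ∂μ,
      Tendsto (fun n : ℕ => (n : ℝ)⁻¹ * ∑ j ∈ Finset.range n, f (T^[j] x))
        atTop (nhds (fstar x))) :
    (∫ x, fstar x ∂μ = ∫ x, f x ∂μ) ∧
      Tendsto (fun n : ℕ => (n : ℝ)⁻¹ * ∑ j ∈ Finset.range n, ∫ x, f (T^[j] x) ∂μ)
        atTop (nhds (∫ x, f x ∂μ)) := by
  classical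
  have hmp : MeasurePreserving T μ μ := by
    refine ⟨hT, Measure.ext fun B hB => ?_⟩
    rw [Measure.map_apply hT hB]
    refine le_antisymm (hhalf B hB) ?_
    have h1 := hhalf Bᶜ hB.compl
    have hsum1 : μ (T ⁻¹' B) + μ (T ⁻¹' Bᶜ) = μ Set.univ := by
      rw [Set.preimage_compl]
      exact measure_add_measure_compl (hT hB)
    have hsum2 : μ B + μ Bᶜ = μ Set.univ := measure_add_measure_compl hB
    have : μ B + μ Bᶜ ≤ μ (T ⁻¹' B) + μ Bᶜ := by
      calc μ B + μ Bᶜ = μ (T ⁻¹' B) + μ (T ⁻¹' Bᶜ) := by rw [hsum1, hsum2]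
        _ ≤ μ (T ⁻¹' B) + μ Bᶜ := by gcongr
    exact (ENNReal.add_le_add_iff_right (measure_ne_top μ Bᶜ)).mp this
  have hmpj : ∀ j : ℕ, MeasurePreserving (T^[j]) μ μ := fun j => hmp.iterate j
  have hTj : ∀ j : ℕ, Measurable (T^[j]) := fun j => hT.iterate j
  -- integrals of f ∘ T^j
  have hint : ∀ j : ℕ, ∫ x, f (T^[j] x) ∂μ = ∫ x, f x ∂μ := fun j => by
    rw [← integral_map (hTj j).aemeasurable hf.aestronglyMeasurable, (hmpj j).map_eq]
  -- the averaged functions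
  set g : ℕ → X → ℝ := fun n x => (n : ℝ)⁻¹ * ∑ j ∈ Finset.range n, f (T^[j] x) with hg
  have hgmeas : ∀ n, Measurable (g n) := fun n =>
    (Finset.measurable_sum _ fun j _ => hf.comp (hTj j)).const_mul _
  have hgint : ∀ n, Integrable (g n) μ := fun n =>
    (integrable_finset_sum _ fun j _ => ((hmpj j).integrable_comp hf.aestronglyMeasurable).mpr hfi).const_mul _
  have hgnonneg : ∀ n x, 0 ≤ g n x := fun n x =>
    mul_nonneg (by positivity) (Finset.sum_nonneg fun j _ => hf0 _)
  have hintg : ∀ n : ℕ, 1 ≤ n → ∫ x, g n x ∂μ = ∫ x, f x ∂μ := by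
    intro n hn
    have : ∫ x, g n x ∂μ = (n : ℝ)⁻¹ * ∑ j ∈ Finset.range n, ∫ x, f (T^[j] x) ∂μ := by
      simp only [hg]
      rw [integral_const_mul, integral_finset_sum (f := fun j x => f (T^[j] x)) _
        (fun j _ => ((hmpj j).integrable_comp hf.aestronglyMeasurable).mpr hfi)]
    rw [this]
    simp only [hint, Finset.sum_const, Finset.card_range, nsmul_eq_mul, ← mul_assoc]
    rw [inv_mul_cancel₀ (by exact_mod_cast Nat.pos_of_ne_zero (by omega) |>.ne'), one_mul]
  -- second conjunct
  have h2 : Tendsto (fun n : ℕ => (n : ℝ)⁻¹ * ∑ j ∈ Finset.range n, ∫ x, f (T^[j] x) ∂μ)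
      atTop (nhds (∫ x, f x ∂μ)) := by
    refine Tendsto.congr' ?_ (tendsto_const_nhds (x := ∫ x, f x ∂μ))
    filter_upwards [eventually_ge_atTop 1] with n hn
    simp only [hint, Finset.sum_const, Finset.card_range, nsmul_eq_mul, ← mul_assoc]
    rw [inv_mul_cancel₀ (by exact_mod_cast Nat.pos_of_ne_zero (by omega) |>.ne'), one_mul]
  -- nnnorm facts
  set F : X → ℝ≥0∞ := fun x => ENNReal.ofReal (f x) with hF
  have hFmeas : Measurable F := hf.ennreal_ofReal
  have hFfin : ∫⁻ x, F x ∂μ ≠ ⊤ := by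
    have := hfi.2
    rw [hasFiniteIntegral_iff_norm] at this
    simpa [hF, fun x => abs_of_nonneg (hf0 x), Real.norm_eq_abs] using this.ne
  have hFj : ∀ j : ℕ, ∫⁻ x, F (T^[j] x) ∂μ = ∫⁻ x, F x ∂μ := fun j =>
    (hmpj j).lintegral_comp hFmeas
  have hFcomp : ∀ j : ℕ, Measurable fun x => F (T^[j] x) := fun j => hFmeas.comp (hTj j)
  have hFsum : ∀ n : ℕ, Measurable fun x => ∑ j ∈ Finset.range n, F (T^[j] x) := fun n =>
    Finset.measurable_sum _ fun j _ => hFcomp j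
  -- uniform integrability of the averages
  have hui : UnifIntegrable g 1 μ := by
    intro ε hε
    -- tail estimate: choose M with small tail integral
    have htail : Tendsto (fun M : ℕ => ∫⁻ x, Set.indicator {y | (M : ℝ) < f y} F x ∂μ)
        atTop (nhds 0) := by
      have h0 : (0 : ℝ≥0∞) = ∫⁻ x, (0 : ℝ≥0∞) ∂μ := by simp
      rw [h0]
      refine tendsto_lintegral_of_dominated_convergence F
        (fun M => (hFmeas.indicator (measurableSet_lt measurable_const hf))) ?_
        hFfin ?_
      · exact fun M => Filter.Eventually.of_forall fun x =>
          Set.indicator_le_self _ _ x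
      · refine Filter.Eventually.of_forall fun x => ?_
        have : ∀ᶠ M : ℕ in atTop, Set.indicator {y | (M : ℝ) < f y} F x = 0 := by
          filter_upwards [eventually_ge_atTop ⌈f x⌉₊] with M hM
          have : ¬ ((M : ℝ) < f x) := by
            push_neg
            exact le_trans (Nat.le_ceil _) (by exact_mod_cast hM)
          simp [Set.indicator_apply, this]
        exact Tendsto.congr' (this.mono fun M h => h.symm) tendsto_const_nhds
    have hε2 : (0 : ℝ≥0∞) < ENNReal.ofReal (ε / 2) := by
      simp [ENNReal.ofReal_pos]; linarith
    obtain ⟨M, hM⟩ := (htail.eventually_lt_const hε2).exists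
    -- choose δ
    refine ⟨ε / (2 * (M + 1)), by positivity, fun n s hs hμs => ?_⟩
    -- reduce to a per-j estimate
    have hj : ∀ j : ℕ, ∫⁻ x in s, F (T^[j] x) ∂μ ≤ ENNReal.ofReal ε := by
      intro j
      have hptwise : ∀ x, F (T^[j] x) ≤ (M : ℝ≥0∞)
          + Set.indicator {y | (M : ℝ) < f y} F (T^[j] x) := by
        intro x
        by_cases h : (M : ℝ) < f (T^[j] x)
        · rw [Set.indicator_of_mem (show T^[j] x ∈ {y | (M : ℝ) < f y} from h)]
          exact le_add_self
        · rw [Set.indicator_of_notMem (show T^[j] x ∉ {y | (M : ℝ) < f y} from h)]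
          push_neg at h
          calc F (T^[j] x) ≤ ENNReal.ofReal (M : ℝ) := ENNReal.ofReal_le_ofReal h
            _ = (M : ℝ≥0∞) := by simp
            _ ≤ _ := le_add_right le_rfl
      calc ∫⁻ x in s, F (T^[j] x) ∂μ
          ≤ ∫⁻ x in s, ((M : ℝ≥0∞) + Set.indicator {y | (M : ℝ) < f y} F (T^[j] x)) ∂μ :=
            lintegral_mono hptwise
        _ = (M : ℝ≥0∞) * μ s
            + ∫⁻ x in s, Set.indicator {y | (M : ℝ) < f y} F (T^[j] x) ∂μ := by
            rw [lintegral_add_left measurable_const, setLIntegral_const]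
        _ ≤ (M : ℝ≥0∞) * μ s
            + ∫⁻ x, Set.indicator {y | (M : ℝ) < f y} F (T^[j] x) ∂μ := by
            gcongr
            exact Measure.restrict_le_self
        _ = (M : ℝ≥0∞) * μ s + ∫⁻ x, Set.indicator {y | (M : ℝ) < f y} F x ∂μ := by
            rw [(hmpj j).lintegral_comp
              (hFmeas.indicator (measurableSet_lt measurable_const hf))]
        _ ≤ (M : ℝ≥0∞) * ENNReal.ofReal (ε / (2 * (M + 1))) + ENNReal.ofReal (ε / 2) := by
            gcongr
        _ ≤ ENNReal.ofReal (ε / 2) + ENNReal.ofReal (ε / 2) := by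
            gcongr
            have hcast : (M : ℝ≥0∞) = ENNReal.ofReal (M : ℝ) := by simp
            rw [hcast, ← ENNReal.ofReal_mul (by positivity)]
            refine ENNReal.ofReal_le_ofReal ?_
            rw [mul_div_assoc', div_le_div_iff₀ (by positivity) (by norm_num)]
            nlinarith
        _ = ENNReal.ofReal ε := by
            rw [← ENNReal.ofReal_add (by linarith) (by linarith)]
            norm_num
    -- now the average
    rcases Nat.eq_zero_or_pos n with hn | hn
    · subst hn
      have hg0 : g 0 = 0 := by funext x; simp [hg]
      rw [hg0, Set.indicator_zero', eLpNorm_zero]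
      exact zero_le
    · have hkey : eLpNorm (s.indicator (g n)) 1 μ
          = ∫⁻ x in s, ENNReal.ofReal (g n x) ∂μ := by
        rw [eLpNorm_one_eq_lintegral_enorm, ← lintegral_indicator hs]
        refine lintegral_congr fun x => ?_
        rw [← ofReal_norm, Set.indicator_apply, Set.indicator_apply]
        by_cases hx : x ∈ s
        · simp [hx, Real.norm_of_nonneg (hgnonneg n x)]
        · simp [hx]
      rw [hkey]
      have hgof : ∀ x, ENNReal.ofReal (g n x)
          = (n : ℝ≥0∞)⁻¹ * ∑ j ∈ Finset.range n, F (T^[j] x) := by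
        intro x
        simp only [hg]
        rw [ENNReal.ofReal_mul (by positivity),
          ENNReal.ofReal_sum_of_nonneg (fun j _ => hf0 _),
          ENNReal.ofReal_inv_of_pos (by exact_mod_cast hn)]
        simp [hF]
      calc ∫⁻ x in s, ENNReal.ofReal (g n x) ∂μ
          = (n : ℝ≥0∞)⁻¹ * ∑ j ∈ Finset.range n, ∫⁻ x in s, F (T^[j] x) ∂μ := by
            simp only [hgof]
            rw [lintegral_const_mul _ (hFsum n),
              lintegral_finset_sum (f := fun j x => F (T^[j] x)) _ fun j _ => hFcomp j]
        _ ≤ (n : ℝ≥0∞)⁻¹ * ∑ j ∈ Finset.range n, ENNReal.ofReal ε := by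
            gcongr with j hjm
            exact hj j
        _ ≤ ENNReal.ofReal ε := by
            rw [Finset.sum_const, Finset.card_range, nsmul_eq_mul, ← mul_assoc,
              ENNReal.inv_mul_cancel (by exact_mod_cast hn.ne')
                (ENNReal.natCast_ne_top n), one_mul]
  -- fstar is in L¹
  have hfst_aemeas : AEMeasurable fstar μ :=
    aemeasurable_of_tendsto_metrizable_ae _ (fun n => (hgmeas n).aemeasurable) hfstar
  have hfst_memLp : MemLp fstar 1 μ := by
    refine ⟨hfst_aemeas.aestronglyMeasurable, ?_⟩
    rw [eLpNorm_one_eq_lintegral_enorm]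
    have hcongr : (fun x => (‖fstar x‖₊ : ℝ≥0∞))
        =ᵐ[μ] fun x => liminf (fun n => (‖g n x‖₊ : ℝ≥0∞)) atTop := by
      filter_upwards [hfstar] with x hx
      have : Tendsto (fun n => (‖g n x‖₊ : ℝ≥0∞)) atTop (nhds (‖fstar x‖₊ : ℝ≥0∞)) := by
        exact (ENNReal.continuous_coe.comp continuous_nnnorm).continuousAt.tendsto.comp hx
      exact (this.liminf_eq).symm
    calc ∫⁻ x, (‖fstar x‖₊ : ℝ≥0∞) ∂μ
        = ∫⁻ x, liminf (fun n => (‖g n x‖₊ : ℝ≥0∞)) atTop ∂μ := lintegral_congr_ae hcongr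
      _ ≤ liminf (fun n => ∫⁻ x, (‖g n x‖₊ : ℝ≥0∞) ∂μ) atTop :=
          lintegral_liminf_le fun n => (hgmeas n).nnnorm.coe_nnreal_ennreal
      _ ≤ ∫⁻ x, F x ∂μ := by
          refine liminf_le_of_frequently_le (Filter.Frequently.of_forall fun n => ?_)
          have heq : ∀ x, (‖g n x‖₊ : ℝ≥0∞) = ENNReal.ofReal (g n x) := fun x => by
            rw [← enorm_eq_nnnorm, ← ofReal_norm, Real.norm_of_nonneg (hgnonneg n x)]
          simp only [heq]
          rcases Nat.eq_zero_or_pos n with hn | hn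
          · subst hn; simp [hg]
          · have hgof : ∀ x, ENNReal.ofReal (g n x)
                = (n : ℝ≥0∞)⁻¹ * ∑ j ∈ Finset.range n, F (T^[j] x) := by
              intro x
              simp only [hg]
              rw [ENNReal.ofReal_mul (by positivity),
                ENNReal.ofReal_sum_of_nonneg (fun j _ => hf0 _),
                ENNReal.ofReal_inv_of_pos (by exact_mod_cast hn)]
              simp [hF]
            simp only [hgof]
            rw [lintegral_const_mul _ (hFsum n),
              lintegral_finset_sum (f := fun j x => F (T^[j] x)) _ fun j _ => hFcomp j]
            simp only [hFj, Finset.sum_const, Finset.card_range, nsmul_eq_mul, ← mul_assoc]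
            rw [ENNReal.inv_mul_cancel (by exact_mod_cast hn.ne')
              (ENNReal.natCast_ne_top n), one_mul]
      _ < ⊤ := hFfin.lt_top
  have hfst_int : Integrable fstar μ := memLp_one_iff_integrable.mp hfst_memLp
  -- Vitali convergence theorem
  have hL1 : Tendsto (fun n => eLpNorm (g n - fstar) 1 μ) atTop (nhds 0) :=
    tendsto_Lp_finite_of_tendsto_ae le_rfl ENNReal.one_ne_top
      (fun n => (hgmeas n).aestronglyMeasurable) hfst_memLp hui hfstar
  have hIntTendsto : Tendsto (fun n => ∫ x, g n x ∂μ) atTop (nhds (∫ x, fstar x ∂μ)) :=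
    tendsto_integral_of_L1' fstar hfst_int.aestronglyMeasurable (Filter.Eventually.of_forall hgint) hL1
  have hIntTendsto' : Tendsto (fun n => ∫ x, g n x ∂μ) atTop (nhds (∫ x, f x ∂μ)) := by
    refine Tendsto.congr' ?_ (tendsto_const_nhds (x := ∫ x, f x ∂μ))
    filter_upwards [eventually_ge_atTop 1] with n hn
    exact (hintg n hn).symm
  exact ⟨tendsto_nhds_unique hIntTendsto hIntTendsto', h2⟩
end

section
/- (Hopf's Maximal Ergodic theorem for contractions) Let μ be a σ-finite measure on X and U : L¹(X, μ) → L¹(X, μ) a positive linear contraction (g ≥ 0 ⟹ U(g) ≥ 0, and ‖U(g)‖₁ ≤ ‖g‖₁). Then for every f ∈ L¹(X, μ), ∫_{{f̂ > 0}} f dμ ≥ 0, where f̂ = sup_{n ≥ 1} (1/n) Σ_{j=0}^{n-1} Uʲ(f). -/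
open MeasureTheory Filter

theorem hopf_maximal_ergodic
    {X : Type*} [MeasurableSpace X] (μ : Measure X) [SigmaFinite μ]
    (U : (X → ℝ) → (X → ℝ))
    (hadd : ∀ g h : X → ℝ, Integrable g μ → Integrable h μ → U (g + h) = U g + U h)
    (hsmul : ∀ (c : ℝ) (g : X → ℝ), Integrable g μ → U (c • g) = c • U g)
    (hint : ∀ g : X → ℝ, Integrable g μ → Integrable (U g) μ)
    (hpos : ∀ g : X → ℝ, Integrable g μ → (∀ x, 0 ≤ g x) → ∀ x, 0 ≤ U g x)
    (hcontr : ∀ g : X → ℝ, Integrable g μ → ∫ x, |U g x| ∂μ ≤ ∫ x, |g x| ∂μ)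
    (f : X → ℝ) (hf : Integrable f μ) :
    0 ≤ ∫ x in {x : X | ∃ n : ℕ, 1 ≤ n ∧
        0 < (n : ℝ)⁻¹ * ∑ j ∈ Finset.range n, U^[j] f x}, f x ∂μ := by
  classical
  -- U sends 0 to 0
  have hU0 : U 0 = 0 := by
    have h := hsmul 0 0 (integrable_zero _ _ _)
    simpa using h
  -- U is monotone on integrable functions
  have hUmono : ∀ g h : X → ℝ, Integrable g μ → Integrable h μ →
      (∀ x, g x ≤ h x) → ∀ x, U g x ≤ U h x := by
    intro g h hg hh hle x
    have hsub : Integrable (h - g) μ := hh.sub hg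
    have h1 : U h = U g + U (h - g) := by
      have hdecomp : h = g + (h - g) := by funext y; simp
      conv_lhs => rw [hdecomp]
      exact hadd g (h - g) hg hsub
    have h2 : 0 ≤ U (h - g) x :=
      hpos _ hsub (fun y => by simpa using hle y) x
    have h3 := congrFun h1 x
    simp only [Pi.add_apply] at h3
    linarith
  -- iterates are integrable
  have hIter : ∀ j : ℕ, Integrable (U^[j] f) μ := by
    intro j; induction j with
    | zero => simpa using hf
    | succ n ih => rw [Function.iterate_succ_apply']; exact hint _ ih
  -- the ergodic sums
  set S : ℕ → X → ℝ := fun n x => ∑ j ∈ Finset.range n, U^[j] f x with hSdef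
  have hSint : ∀ n, Integrable (S n) μ := fun n =>
    integrable_finset_sum _ (fun j _ => hIter j)
  -- U commutes with the finite sums
  have hUsum : ∀ n, U (S n) = fun x => ∑ j ∈ Finset.range n, U (U^[j] f) x := by
    intro n; induction n with
    | zero =>
      have h0 : S 0 = 0 := by funext x; simp [hSdef]
      rw [h0, hU0]; funext x; simp
    | succ n ih =>
      have hstep : S (n + 1) = S n + U^[n] f := by
        funext x; simp [hSdef, Finset.sum_range_succ]
      rw [hstep, hadd _ _ (hSint n) (hIter n), ih]
      funext x; simp [Finset.sum_range_succ]
  -- recurrence S (n+1) = f + U (S n)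
  have hSrec : ∀ n, ∀ x, S (n + 1) x = f x + U (S n) x := by
    intro n x
    rw [hUsum n]
    show (∑ j ∈ Finset.range (n + 1), U^[j] f x)
        = f x + ∑ j ∈ Finset.range n, U (U^[j] f) x
    rw [Finset.sum_range_succ']
    simp only [Function.iterate_zero_apply]
    have : ∀ j, U^[j + 1] f x = U (U^[j] f) x := by
      intro j; rw [Function.iterate_succ_apply']
    rw [Finset.sum_congr rfl (fun j _ => this j)]
    ring
  -- maximal functions
  set M : ℕ → X → ℝ := fun N x =>
      (Finset.range (N + 1)).sup' Finset.nonempty_range_add_one (fun k => S (k + 1) x)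
    with hMdef
  have hMint : ∀ N, Integrable (M N) μ := by
    intro N; induction N with
    | zero =>
      have h0 : M 0 = S 1 := by funext x; simp [hMdef]
      rw [h0]; exact hSint 1
    | succ n ih =>
      have h1 : M (n + 1) = fun x => S (n + 2) x ⊔ M n x := by
        funext x
        apply le_antisymm
        · apply Finset.sup'_le
          intro k hk
          have hk' : k ≤ n + 1 := Nat.lt_succ_iff.mp (Finset.mem_range.mp hk)
          rcases Nat.lt_or_ge k (n + 1) with h | h
          · exact le_sup_of_le_right
              (Finset.le_sup' (fun k => S (k + 1) x) (Finset.mem_range.2 h))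
          · have : k = n + 1 := by omega
            subst this
            exact le_sup_left
        · apply sup_le
          · exact Finset.le_sup' (fun k => S (k + 1) x)
              (Finset.mem_range.2 (by omega))
          · apply Finset.sup'_le
            intro k hk
            exact Finset.le_sup' (fun k => S (k + 1) x)
              (Finset.mem_range.2 (by have := Finset.mem_range.mp hk; omega))
      rw [h1]
      exact (hSint (n + 2)).sup ih
  set Mp : ℕ → X → ℝ := fun N x => M N x ⊔ 0 with hMpdef
  have hMpint : ∀ N, Integrable (Mp N) μ := fun N =>
    (hMint N).sup (integrable_zero _ _ _)
  have hMpnonneg : ∀ N x, 0 ≤ Mp N x := fun N x => le_sup_right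
  -- S k ≤ Mp N for k ≤ N + 1
  have hSleMp : ∀ N k, k ≤ N + 1 → ∀ x, S k x ≤ Mp N x := by
    intro N k hk x
    cases k with
    | zero =>
      have : S 0 x = 0 := by simp [hSdef]
      rw [this]; exact le_sup_right
    | succ j =>
      have hj : j ∈ Finset.range (N + 1) := Finset.mem_range.2 (by omega)
      have h1 : S (j + 1) x ≤ M N x := Finset.le_sup' (fun k => S (k + 1) x) hj
      exact h1.trans le_sup_left
  -- key pointwise inequality: M N ≤ f + U (Mp N)
  have hkey : ∀ N x, M N x ≤ f x + U (Mp N) x := by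
    intro N x
    apply Finset.sup'_le
    intro k hk
    have hk' : k ≤ N := Nat.lt_succ_iff.mp (Finset.mem_range.mp hk)
    have h1 : S (k + 1) x = f x + U (S k) x := hSrec k x
    have h2 : U (S k) x ≤ U (Mp N) x :=
      hUmono (S k) (Mp N) (hSint k) (hMpint N)
        (hSleMp N k (by omega)) x
    linarith
  have hUMpnonneg : ∀ N x, 0 ≤ U (Mp N) x := fun N =>
    hpos _ (hMpint N) (hMpnonneg N)
  have hUMpint : ∀ N, Integrable (U (Mp N)) μ := fun N => hint _ (hMpint N)
  -- integral contraction
  have hIntUMp : ∀ N, ∫ x, U (Mp N) x ∂μ ≤ ∫ x, Mp N x ∂μ := by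
    intro N
    calc ∫ x, U (Mp N) x ∂μ = ∫ x, |U (Mp N) x| ∂μ :=
          integral_congr_ae (Eventually.of_forall fun x =>
            (abs_of_nonneg (hUMpnonneg N x)).symm)
      _ ≤ ∫ x, |Mp N x| ∂μ := hcontr _ (hMpint N)
      _ = ∫ x, Mp N x ∂μ :=
          integral_congr_ae (Eventually.of_forall fun x =>
            abs_of_nonneg (hMpnonneg N x))
  -- measurable representatives
  set φ : ℕ → X → ℝ := fun j => (hIter j).1.mk (U^[j] f) with hφdef
  have hφmeas : ∀ j, Measurable (φ j) := fun j =>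
    (hIter j).1.stronglyMeasurable_mk.measurable
  have hA : ∀ᵐ x ∂μ, ∀ j, U^[j] f x = φ j x :=
    ae_all_iff.2 fun j => (hIter j).1.ae_eq_mk
  set T : ℕ → X → ℝ := fun n x => ∑ j ∈ Finset.range n, φ j x with hTdef
  have hTmeas : ∀ n, Measurable (T n) := fun n =>
    Finset.measurable_sum _ (fun j _ => hφmeas j)
  have hTS : ∀ᵐ x ∂μ, ∀ n, S n x = T n x := by
    filter_upwards [hA] with x hx n
    exact Finset.sum_congr rfl fun j _ => hx j
  -- approximating measurable sets
  set Et : ℕ → Set X := fun N => {x | ∃ k ≤ N, 0 < T (k + 1) x} with hEtdef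
  have hEtmeas : ∀ N, MeasurableSet (Et N) := by
    intro N
    have h1 : Et N = ⋃ k ∈ Finset.range (N + 1), {x | 0 < T (k + 1) x} := by
      ext x; simp [hEtdef, Nat.lt_succ_iff]
    rw [h1]
    exact (Finset.range (N + 1)).measurableSet_biUnion fun k _ =>
      measurableSet_lt measurable_const (hTmeas (k + 1))
  have hEtmono : Monotone Et := by
    intro a b hab x hx
    obtain ⟨k, hk, h⟩ := hx
    exact ⟨k, hk.trans hab, h⟩
  -- the main estimate on each Et N
  have hstep : ∀ N, 0 ≤ ∫ x in Et N, f x ∂μ := by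
    intro N
    have hmem : ∀ᵐ x ∂(μ.restrict (Et N)), Mp N x - U (Mp N) x ≤ f x := by
      filter_upwards [ae_restrict_mem (hEtmeas N), ae_restrict_of_ae hTS]
        with x hx hTSx
      obtain ⟨k, hk, hT⟩ := hx
      rw [← hTSx (k + 1)] at hT
      have hkr : k ∈ Finset.range (N + 1) := Finset.mem_range.2 (by omega)
      have h1 : S (k + 1) x ≤ M N x := Finset.le_sup' (fun k => S (k + 1) x) hkr
      have h2 : 0 < M N x := lt_of_lt_of_le hT h1
      have h3 : Mp N x = M N x := sup_eq_left.2 h2.le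
      have h4 := hkey N x
      rw [h3]; linarith
    have h1 : ∫ x in Et N, (Mp N x - U (Mp N) x) ∂μ ≤ ∫ x in Et N, f x ∂μ :=
      integral_mono_ae ((hMpint N).sub (hUMpint N)).restrict hf.restrict hmem
    have h2 : ∫ x in Et N, (Mp N x - U (Mp N) x) ∂μ
        = (∫ x in Et N, Mp N x ∂μ) - ∫ x in Et N, U (Mp N) x ∂μ :=
      integral_sub (hMpint N).restrict (hUMpint N).restrict
    have h3 : ∫ x in (Et N)ᶜ, Mp N x ∂μ = 0 := by
      apply integral_eq_zero_of_ae
      filter_upwards [ae_restrict_mem (hEtmeas N).compl, ae_restrict_of_ae hTS]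
        with x hx hTSx
      have hM : M N x ≤ 0 := by
        apply Finset.sup'_le
        intro k hk
        have hk' : k ≤ N := Nat.lt_succ_iff.mp (Finset.mem_range.mp hk)
        by_contra hc
        push_neg at hc
        exact hx ⟨k, hk', by rw [← hTSx (k + 1)]; exact hc⟩
      show Mp N x = 0
      exact sup_eq_right.2 hM
    have h4 : ∫ x, Mp N x ∂μ ≤ ∫ x in Et N, Mp N x ∂μ := by
      have := integral_add_compl (hEtmeas N) (hMpint N) (f := Mp N)
      rw [h3] at this
      linarith [this]
    have h5 : ∫ x in Et N, U (Mp N) x ∂μ ≤ ∫ x, U (Mp N) x ∂μ :=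
      setIntegral_le_integral (hUMpint N)
        (Eventually.of_forall (hUMpnonneg N))
    have h6 := hIntUMp N
    linarith
  -- identify the target set with ⋃ N, Et N up to measure zero
  have hEeq : {x : X | ∃ n : ℕ, 1 ≤ n ∧
      0 < (n : ℝ)⁻¹ * ∑ j ∈ Finset.range n, U^[j] f x} =ᵐ[μ] ⋃ N, Et N := by
    rw [Filter.eventuallyEq_set]
    filter_upwards [hTS] with x hx
    constructor
    · rintro ⟨n, hn, hpos'⟩
      have hc : (0 : ℝ) < (n : ℝ)⁻¹ := by
        have : (0 : ℝ) < (n : ℝ) := by exact_mod_cast hn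
        positivity
      have hSn : 0 < S n x := by
        by_contra hcon
        push_neg at hcon
        nlinarith
      obtain ⟨m, rfl⟩ : ∃ m, n = m + 1 := ⟨n - 1, by omega⟩
      refine Set.mem_iUnion.2 ⟨m, ⟨m, le_refl m, ?_⟩⟩
      rw [← hx (m + 1)]; exact hSn
    · intro hx'
      obtain ⟨N, k, hk, hT⟩ := Set.mem_iUnion.1 hx'
      refine ⟨k + 1, by omega, ?_⟩
      have hSk : 0 < S (k + 1) x := by rw [hx (k + 1)]; exact hT
      have hc : (0 : ℝ) < ((k + 1 : ℕ) : ℝ)⁻¹ := by positivity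
      exact mul_pos hc hSk
  rw [setIntegral_congr_set hEeq]
  have htend := tendsto_setIntegral_of_monotone hEtmeas hEtmono
    (hf.integrableOn (s := ⋃ n, Et n))
  exact ge_of_tendsto' htend hstep
end

section
/- Let μ be a σ-finite measure half-invariant under a measurable T : X → X, let f ∈ L¹(X, μ) be non-negative, and let β > 0 and α < β. Set Y = {x ∈ X : liminf_n (1/n) Σ_{j=0}^{n-1} f(Tʲ(x)) < α < β < limsup_n (1/n) Σ_{j=0}^{n-1} f(Tʲ(x))}. Then every measurable subset C ⊆ Y with μ(C) < ∞ satisfies μ(C) ≤ (1/β) ∫ |f| dμ, and consequently μ(Y) ≤ (1/β) ∫ |f| dμ < ∞. -/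
open MeasureTheory Filter

namespace DivergenceAux

variable {X : Type*} [MeasurableSpace X] {μ : Measure X} {T : X → X}

/-- The iterated maximum function from Garsia's proof of the maximal ergodic theorem. -/
noncomputable def M (T : X → X) (g : X → ℝ) : ℕ → X → ℝ
  | 0 => fun _ => 0
  | n + 1 => fun x => max 0 (g x + M T g n (T x))

lemma M_nonneg (g : X → ℝ) : ∀ n x, 0 ≤ M T g n x
  | 0, _ => le_refl 0
  | n + 1, x => le_max_left _ _

lemma M_mono (g : X → ℝ) : ∀ n x, M T g n x ≤ M T g (n + 1) x
  | 0, x => M_nonneg g 1 x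
  | n + 1, x => max_le_max le_rfl (add_le_add le_rfl (M_mono g n (T x)))

lemma M_measurable (hT : Measurable T) {g : X → ℝ} (hg : Measurable g) :
    ∀ n, Measurable (M T g n)
  | 0 => measurable_const
  | n + 1 => measurable_const.max (hg.add ((M_measurable hT hg n).comp hT))

lemma M_ge_sum (g : X → ℝ) :
    ∀ n x, (∑ j ∈ Finset.range n, g (T^[j] x)) ≤ M T g n x
  | 0, x => by simp [M]
  | n + 1, x => by
      have h : (∑ j ∈ Finset.range (n + 1), g (T^[j] x))
          = g x + ∑ j ∈ Finset.range n, g (T^[j] (T x)) := by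
        rw [Finset.sum_range_succ']
        simp [Function.iterate_succ_apply, add_comm]
      rw [h]
      exact le_trans (add_le_add le_rfl (M_ge_sum g n (T x))) (le_max_right _ _)

/-- Half-invariance: composing a nonnegative integrable function with `T` does not
increase its integral. -/
lemma comp_le (hT : Measurable T)
    (hhalf : ∀ B : Set X, MeasurableSet B → μ (T ⁻¹' B) ≤ μ B)
    {h : X → ℝ} (hm : Measurable h) (h0 : ∀ x, 0 ≤ h x) (hi : Integrable h μ) :
    Integrable (fun x => h (T x)) μ ∧ ∫ x, h (T x) ∂μ ≤ ∫ x, h x ∂μ := by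
  have hmap : μ.map T ≤ μ := by
    rw [Measure.le_iff]
    intro s hs
    rw [Measure.map_apply hT hs]
    exact hhalf s hs
  have hl : ∫⁻ x, ENNReal.ofReal (h (T x)) ∂μ ≤ ∫⁻ x, ENNReal.ofReal (h x) ∂μ := by
    rw [← lintegral_map hm.ennreal_ofReal hT]
    exact lintegral_mono' hmap le_rfl
  have hfin : ∫⁻ x, ENNReal.ofReal (h x) ∂μ < ⊤ :=
    (hasFiniteIntegral_iff_ofReal (ae_of_all _ h0)).1 hi.hasFiniteIntegral
  have hint : Integrable (fun x => h (T x)) μ :=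
    ⟨(hm.comp hT).aestronglyMeasurable,
      (hasFiniteIntegral_iff_ofReal (ae_of_all _ fun x => h0 (T x))).2 (lt_of_le_of_lt hl hfin)⟩
  refine ⟨hint, ?_⟩
  rw [integral_eq_lintegral_of_nonneg_ae (ae_of_all _ fun x => h0 (T x))
    (hm.comp hT).aestronglyMeasurable,
    integral_eq_lintegral_of_nonneg_ae (ae_of_all _ h0) hm.aestronglyMeasurable]
  exact ENNReal.toReal_mono hfin.ne hl

lemma M_integrable (hT : Measurable T)
    (hhalf : ∀ B : Set X, MeasurableSet B → μ (T ⁻¹' B) ≤ μ B)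
    {g : X → ℝ} (hg : Measurable g) (hgi : Integrable g μ) :
    ∀ n, Integrable (M T g n) μ
  | 0 => by simpa [M] using integrable_zero X ℝ μ
  | n + 1 => by
      have hcomp : Integrable (fun x => M T g n (T x)) μ :=
        (comp_le hT hhalf (M_measurable hT hg n) (M_nonneg g n)
          (M_integrable hT hhalf hg hgi n)).1
      have h := (integrable_zero X ℝ μ).sup (hgi.add hcomp)
      exact h.congr (ae_of_all _ fun x => by rw [Pi.sup_apply]; rfl)

/-- Hopf's maximal ergodic lemma. -/
lemma hopf (hT : Measurable T)
    (hhalf : ∀ B : Set X, MeasurableSet B → μ (T ⁻¹' B) ≤ μ B)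
    {g : X → ℝ} (hg : Measurable g) (hgi : Integrable g μ) (n : ℕ) :
    0 ≤ ∫ x in {x | 0 < M T g n x}, g x ∂μ := by
  cases n with
  | zero => simp [M]
  | succ n =>
    set E : Set X := {x | 0 < M T g (n + 1) x} with hEdef
    have hE : MeasurableSet E := measurableSet_lt measurable_const (M_measurable hT hg (n + 1))
    have hMeq : ∀ x ∈ E, g x = M T g (n + 1) x - M T g n (T x) := by
      intro x hx
      have h1 : 0 < max 0 (g x + M T g n (T x)) := hx
      have h2 : max 0 (g x + M T g n (T x)) = g x + M T g n (T x) := by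
        rcases max_cases 0 (g x + M T g n (T x)) with ⟨h, _⟩ | ⟨h, _⟩
        · exact absurd (h ▸ h1) (lt_irrefl 0)
        · exact h
      have : M T g (n + 1) x = g x + M T g n (T x) := h2
      linarith
    have hMcomp := comp_le hT hhalf (M_measurable hT hg n) (M_nonneg g n)
      (M_integrable hT hhalf hg hgi n)
    have hMint := M_integrable hT hhalf hg hgi (n + 1)
    have key : ∫ x in E, g x ∂μ
        = ∫ x in E, M T g (n + 1) x ∂μ - ∫ x in E, M T g n (T x) ∂μ := by
      rw [← integral_sub (hMint.integrableOn) (hMcomp.1.integrableOn)]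
      exact setIntegral_congr_fun hE hMeq
    have hzero : ∫ x in Eᶜ, M T g (n + 1) x ∂μ = 0 := by
      have : ∀ x ∈ Eᶜ, M T g (n + 1) x = 0 := fun x hx =>
        le_antisymm (not_lt.1 hx) (M_nonneg g (n + 1) x)
      rw [setIntegral_congr_fun hE.compl this]
      simp
    have hEfull : ∫ x in E, M T g (n + 1) x ∂μ = ∫ x, M T g (n + 1) x ∂μ := by
      rw [← integral_add_compl hE hMint, hzero, add_zero]
    have h1 : ∫ x in E, M T g n (T x) ∂μ ≤ ∫ x, M T g n (T x) ∂μ :=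
      setIntegral_le_integral hMcomp.1 (ae_of_all _ fun x => M_nonneg g n (T x))
    have h2 : ∫ x, M T g n (T x) ∂μ ≤ ∫ x, M T g n x ∂μ := hMcomp.2
    have h3 : ∫ x, M T g n x ∂μ ≤ ∫ x, M T g (n + 1) x ∂μ :=
      integral_mono (M_integrable hT hhalf hg hgi n) hMint (fun x => M_mono g n x)
    rw [key, hEfull]
    linarith

end DivergenceAux

open DivergenceAux

theorem divergence_set_measure_bound
    {X : Type*} [MeasurableSpace X] (μ : Measure X) [SigmaFinite μ]
    (T : X → X) (hT : Measurable T)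
    (hhalf : ∀ B : Set X, MeasurableSet B → μ (T ⁻¹' B) ≤ μ B)
    (f : X → ℝ) (hf : Measurable f) (hfi : Integrable f μ) (hf0 : ∀ x, 0 ≤ f x)
    (α β : ℝ) (hβ : 0 < β) (hαβ : α < β)
    (Y : Set X)
    (hY : Y = {x : X |
      liminf (fun n : ℕ =>
          (((n : ℝ)⁻¹ * ∑ j ∈ Finset.range n, f (T^[j] x) : ℝ) : EReal)) atTop
        < (α : EReal) ∧
      (β : EReal) < limsup (fun n : ℕ =>
          (((n : ℝ)⁻¹ * ∑ j ∈ Finset.range n, f (T^[j] x) : ℝ) : EReal)) atTop}) :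
    (∀ C : Set X, MeasurableSet C → C ⊆ Y → μ C < ⊤ →
        μ C ≤ ENNReal.ofReal (β⁻¹ * ∫ x, |f x| ∂μ)) ∧
      μ Y ≤ ENNReal.ofReal (β⁻¹ * ∫ x, |f x| ∂μ) ∧ μ Y < ⊤ := by
  have habs : ∫ x, |f x| ∂μ = ∫ x, f x ∂μ := by
    congr 1
    funext x
    exact abs_of_nonneg (hf0 x)
  -- measurability of the averages
  have havg : ∀ n : ℕ, Measurable fun x =>
      ((n : ℝ)⁻¹ * ∑ j ∈ Finset.range n, f (T^[j] x) : ℝ) := fun n =>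
    (Finset.measurable_sum (Finset.range n) fun j _ => hf.comp (hT.iterate j)).const_mul _
  -- Part 1 : the bound for finite-measure subsets
  have part1 : ∀ C : Set X, MeasurableSet C → C ⊆ Y → μ C < ⊤ →
      μ C ≤ ENNReal.ofReal (β⁻¹ * ∫ x, |f x| ∂μ) := by
    intro C hC hCY hCfin
    set g : X → ℝ := fun x => f x - β * C.indicator 1 x with hgdef
    have hindm : Measurable (C.indicator (1 : X → ℝ)) := measurable_one.indicator hC
    have hindi : Integrable (C.indicator (1 : X → ℝ)) μ :=
      (integrable_indicator_iff hC).2 (integrableOn_const hCfin.ne)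
    have hg : Measurable g := hf.sub (hindm.const_mul β)
    have hgi : Integrable g μ := hfi.sub (hindi.const_mul β)
    set E : ℕ → Set X := fun n => {x | 0 < M T g n x} with hEdef
    have hEmeas : ∀ n, MeasurableSet (E n) := fun n =>
      measurableSet_lt measurable_const (M_measurable hT hg n)
    -- from Hopf's lemma: β * μ (E n ∩ C) ≤ ∫ f for every n
    have key : ∀ n, β * (μ (E n ∩ C)).toReal ≤ ∫ x, f x ∂μ := by
      intro n
      have h0 := hopf hT hhalf hg hgi n
      have hsub : ∫ x in E n, g x ∂μ
          = ∫ x in E n, f x ∂μ - β * ∫ x in E n, C.indicator 1 x ∂μ := by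
        rw [← integral_const_mul, ← integral_sub hfi.integrableOn
          ((hindi.const_mul β).integrableOn)]
      have hind : ∫ x in E n, C.indicator 1 x ∂μ = (μ (E n ∩ C)).toReal := by
        rw [← integral_indicator (hEmeas n), Set.indicator_indicator,
          integral_indicator_one ((hEmeas n).inter hC)]
        rfl
      have hfle : ∫ x in E n, f x ∂μ ≤ ∫ x, f x ∂μ :=
        setIntegral_le_integral hfi (ae_of_all _ hf0)
      rw [hsub, hind] at h0
      linarith
    -- each μ (E n ∩ C) is at most the claimed bound
    have hbnd : ∀ n, μ (E n ∩ C) ≤ ENNReal.ofReal (β⁻¹ * ∫ x, |f x| ∂μ) := by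
      intro n
      have hfin : μ (E n ∩ C) ≠ ⊤ :=
        ((measure_mono Set.inter_subset_right).trans_lt hCfin).ne
      have ht : (μ (E n ∩ C)).toReal ≤ β⁻¹ * ∫ x, |f x| ∂μ := by
        rw [habs, le_inv_mul_iff₀ hβ]
        exact key n
      calc μ (E n ∩ C) = ENNReal.ofReal (μ (E n ∩ C)).toReal :=
            (ENNReal.ofReal_toReal hfin).symm
        _ ≤ ENNReal.ofReal (β⁻¹ * ∫ x, |f x| ∂μ) := ENNReal.ofReal_le_ofReal ht
    -- C is covered by the union of the E n
    have hcover : C ⊆ ⋃ n, E n ∩ C := by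
      intro x hx
      have hxY := hCY hx
      rw [hY] at hxY
      obtain ⟨-, hlim⟩ := hxY
      have hfreq : ∃ᶠ n : ℕ in atTop, (β : EReal)
          < (((n : ℝ)⁻¹ * ∑ j ∈ Finset.range n, f (T^[j] x) : ℝ) : EReal) :=
        frequently_lt_of_lt_limsup (Filter.isCobounded_le_of_bot) hlim
      obtain ⟨n, hn, hn1⟩ := (hfreq.and_eventually (eventually_ge_atTop 1)).exists
      have hnR : (0 : ℝ) < (n : ℝ) := by exact_mod_cast hn1
      have hreal : β < (n : ℝ)⁻¹ * ∑ j ∈ Finset.range n, f (T^[j] x) := by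
        exact_mod_cast hn
      have hsumf : β * (n : ℝ) < ∑ j ∈ Finset.range n, f (T^[j] x) := by
        have := mul_lt_mul_of_pos_left hreal hnR
        rwa [← mul_assoc, mul_inv_cancel₀ hnR.ne', one_mul, mul_comm (n:ℝ) β] at this
      have hsumind : ∑ j ∈ Finset.range n, C.indicator (1 : X → ℝ) (T^[j] x) ≤ (n : ℝ) := by
        calc ∑ j ∈ Finset.range n, C.indicator (1 : X → ℝ) (T^[j] x)
            ≤ ∑ _j ∈ Finset.range n, (1 : ℝ) :=
              Finset.sum_le_sum fun j _ => Set.indicator_le_self' (fun _ _ => zero_le_one) _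
          _ = (n : ℝ) := by simp
      have hSpos : 0 < ∑ j ∈ Finset.range n, g (T^[j] x) := by
        have : ∑ j ∈ Finset.range n, g (T^[j] x)
            = (∑ j ∈ Finset.range n, f (T^[j] x))
              - β * ∑ j ∈ Finset.range n, C.indicator 1 (T^[j] x) := by
          rw [Finset.mul_sum, ← Finset.sum_sub_distrib]
        rw [this]
        nlinarith [hsumind, hsumf]
      have hxE : x ∈ E n := lt_of_lt_of_le hSpos (M_ge_sum g n x)
      exact Set.mem_iUnion.2 ⟨n, hxE, hx⟩
    -- the sets E n ∩ C are monotone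
    have hmono : Monotone fun n => E n ∩ C := by
      intro m n hmn
      refine Set.inter_subset_inter_left C ?_
      intro x hx
      have hM : Monotone fun k => M T g k x :=
        monotone_nat_of_le_succ fun k => M_mono g k x
      exact lt_of_lt_of_le hx (hM hmn)
    calc μ C ≤ μ (⋃ n, E n ∩ C) := measure_mono hcover
      _ = ⨆ n, μ (E n ∩ C) := (hmono.directed_le).measure_iUnion
      _ ≤ ENNReal.ofReal (β⁻¹ * ∫ x, |f x| ∂μ) := iSup_le hbnd
  -- Part 2 : the bound for Y itself, via σ-finiteness
  have hYmeas : MeasurableSet Y := by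
    rw [hY]
    have h1 : Measurable fun x => liminf (fun n : ℕ =>
        (((n : ℝ)⁻¹ * ∑ j ∈ Finset.range n, f (T^[j] x) : ℝ) : EReal)) atTop :=
      Measurable.liminf fun n => measurable_coe_real_ereal.comp (havg n)
    have h2 : Measurable fun x => limsup (fun n : ℕ =>
        (((n : ℝ)⁻¹ * ∑ j ∈ Finset.range n, f (T^[j] x) : ℝ) : EReal)) atTop :=
      Measurable.limsup fun n => measurable_coe_real_ereal.comp (havg n)
    have heq : {x : X |
        liminf (fun n : ℕ =>
            (((n : ℝ)⁻¹ * ∑ j ∈ Finset.range n, f (T^[j] x) : ℝ) : EReal)) atTop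
          < (α : EReal) ∧
        (β : EReal) < limsup (fun n : ℕ =>
            (((n : ℝ)⁻¹ * ∑ j ∈ Finset.range n, f (T^[j] x) : ℝ) : EReal)) atTop}
        = (fun x => liminf (fun n : ℕ =>
            (((n : ℝ)⁻¹ * ∑ j ∈ Finset.range n, f (T^[j] x) : ℝ) : EReal)) atTop) ⁻¹'
              Set.Iio (α : EReal)
          ∩ (fun x => limsup (fun n : ℕ =>
            (((n : ℝ)⁻¹ * ∑ j ∈ Finset.range n, f (T^[j] x) : ℝ) : EReal)) atTop) ⁻¹'
              Set.Ioi (β : EReal) := rfl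
    rw [heq]
    exact (h1 measurableSet_Iio).inter (h2 measurableSet_Ioi)
  have hYbound : μ Y ≤ ENNReal.ofReal (β⁻¹ * ∫ x, |f x| ∂μ) := by
    have hYeq : Y = ⋃ n, Y ∩ spanningSets μ n := by
      rw [← Set.inter_iUnion, iUnion_spanningSets, Set.inter_univ]
    have hmono : Monotone fun n => Y ∩ spanningSets μ n := fun m n h =>
      Set.inter_subset_inter_right Y (monotone_spanningSets μ h)
    rw [hYeq, (hmono.directed_le).measure_iUnion]
    refine iSup_le fun n => part1 _ (hYmeas.inter (measurableSet_spanningSets μ n))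
      Set.inter_subset_left ?_
    exact (measure_mono Set.inter_subset_right).trans_lt (measure_spanningSets_lt_top μ n)
  exact ⟨part1, hYbound, lt_of_le_of_lt hYbound ENNReal.ofReal_lt_top⟩
end
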